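/- Let P be a c-complete cd-structure on a category 𝒳 and let 𝒞 be a category. If a presheaf F : 𝒳^op → 𝒞 sends every distinguished square of P to a pullback square in 𝒞, then F is a sheaf for the c-topology τ_P^c. -/

import Mathlib

open CategoryTheory Limits Opposite

universe w v u

namespace CdFormal

variable {C : Type u} [Category.{v} C] {D : Type w} [Category.{v} D]

/-- A commutative square in `C`: `B → Y`, `B → A`, `p : Y → X`, `i : A → X`. -/
structure CDSquare (C : Type u) [Category.{v} C] where
  B : C
  A : C
  Y : C
  X : C
  e : B ⟶ A
  q : B ⟶ Y
  i : A ⟶ X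
  p : Y ⟶ X
  w : q ≫ p = e ≫ i

/-- The sieve on `X` generated by the feet `{i, p}` of a square. -/
def CDSquare.sieve (Q : CDSquare C) : Sieve Q.X where
  arrows Z g := (∃ h : Z ⟶ Q.A, g = h ≫ Q.i) ∨ (∃ h : Z ⟶ Q.Y, g = h ≫ Q.p)
  downward_closed := by
    rintro Z Z' g (⟨h, rfl⟩ | ⟨h, rfl⟩) g'
    · exact Or.inl ⟨g' ≫ h, by simp⟩
    · exact Or.inr ⟨g' ≫ h, by simp⟩

/-- The c-topology associated to a cd-structure `P`: the coarsest Grothendieck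
topology for which the sieve generated by the feet of each distinguished square is covering. -/
def cTopology (P : Set (CDSquare C)) : GrothendieckTopology C :=
  sInf {J | ∀ Q ∈ P, Q.sieve ∈ J Q.X}

/-- The class of simple `P`-covers. -/
inductive IsSimpleCover (P : Set (CDSquare C)) : (X : C) → Presieve X → Prop
  | iso {X' X : C} (f : X' ⟶ X) (hf : IsIso f) : IsSimpleCover P X (Presieve.singleton f)
  | glue (Q : CDSquare C) (hQ : Q ∈ P) (RY : Presieve Q.Y) (RA : Presieve Q.A)
      (hY : IsSimpleCover P Q.Y RY) (hA : IsSimpleCover P Q.A RA) :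
      IsSimpleCover P Q.X (fun Z g =>
        (∃ h : Z ⟶ Q.Y, RY h ∧ g = h ≫ Q.p) ∨ (∃ h : Z ⟶ Q.A, RA h ∧ g = h ≫ Q.i))

/-- `P` is c-complete: every covering sieve for the associated c-topology contains a
simple `P`-cover. -/
def IsCComplete (P : Set (CDSquare C)) : Prop :=
  ∀ ⦃X : C⦄ (S : Sieve X), S ∈ cTopology P X →
    ∃ R : Presieve X, IsSimpleCover P X R ∧ ∀ ⦃Z⦄ (g : Z ⟶ X), R g → S g

/-- `ρ(X)`: the sheafification of the presheaf represented by `X`. -/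
noncomputable def rho (J : GrothendieckTopology C) (X : C) : Sheaf J (Type (max u v)) :=
  (presheafToSheaf J _).obj (yoneda.obj X ⋙ uliftFunctor.{u})

/-- Functoriality of `ρ`. -/
noncomputable def rhoMap (J : GrothendieckTopology C) {X Y : C} (f : X ⟶ Y) :
    rho J X ⟶ rho J Y :=
  (presheafToSheaf J _).map (Functor.whiskerRight (yoneda.map f) uliftFunctor.{u})

lemma rhoMap_comp (J : GrothendieckTopology C) {X Y Z : C} (f : X ⟶ Y) (g : Y ⟶ Z) :
    rhoMap J (f ≫ g) = rhoMap J f ≫ rhoMap J g := by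
  simp only [rhoMap, yoneda.map_comp, Functor.whiskerRight_comp, Functor.map_comp]
  rfl

instance instHasColimitsOfShapePairSheafRho (J : GrothendieckTopology C) :
    HasColimitsOfShape (Discrete WalkingPair) (Sheaf J (Type (max u v))) :=
  Sheaf.instHasColimitsOfShape

/-- The canonical comparison morphism
`ρ(Y) ⊔ (ρ(B) ×_{ρ(A)} ρ(B)) ⟶ ρ(Y) ×_{ρ(X)} ρ(Y)` associated to a square. -/
noncomputable def regCompare (J : GrothendieckTopology C) (Q : CDSquare C) :
    (rho J Q.Y) ⨿ (pullback (rhoMap J Q.e) (rhoMap J Q.e)) ⟶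
      pullback (rhoMap J Q.p) (rhoMap J Q.p) :=
  coprod.desc (pullback.lift (𝟙 _) (𝟙 _) rfl)
    (pullback.lift (pullback.fst _ _ ≫ rhoMap J Q.q) (pullback.snd _ _ ≫ rhoMap J Q.q)
      (by
        rw [Category.assoc, Category.assoc, ← rhoMap_comp, Q.w, rhoMap_comp,
          ← Category.assoc, ← Category.assoc, pullback.condition]))

/-- `P` is c-regular. -/
def IsCRegular (P : Set (CDSquare C)) : Prop :=
  ∀ Q ∈ P, IsPullback Q.q Q.e Q.p Q.i ∧ Mono Q.i ∧ Epi (regCompare (cTopology P) Q)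

/-- The image of a square under a functor. -/
@[simps]
def CDSquare.map (F : C ⥤ D) (Q : CDSquare C) : CDSquare D where
  B := F.obj Q.B
  A := F.obj Q.A
  Y := F.obj Q.Y
  X := F.obj Q.X
  e := F.map Q.e
  q := F.map Q.q
  i := F.map Q.i
  p := F.map Q.p
  w := by rw [← F.map_comp, ← F.map_comp, Q.w]

/-- The induced cd-structure on a slice category. -/
def sliceCd (P : Set (CDSquare C)) (X : C) : Set (CDSquare (Over X)) :=
  {Q | Q.map (Over.forget X) ∈ P}

/-- A dimension function on a category: an initial object `empty` together with a
dimension taking the minimal value `bot` exactly on objects isomorphic to `empty`. -/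
structure DimensionFunction (C : Type u) [Category.{v} C] (Λ : Type w) [Preorder Λ] where
  empty : C
  init : Nonempty (IsInitial empty)
  dim : C → Λ
  bot : Λ
  bot_le : ∀ X : C, bot ≤ dim X
  dim_eq_bot_iff : ∀ X : C, dim X = bot ↔ Nonempty (X ≅ empty)

/-- A cd-structure is compatible with a dimension function. -/
def CompatibleWithDim {Λ : Type w} [Preorder Λ] (P : Set (CDSquare C))
    (Dm : DimensionFunction C Λ) : Prop :=
  ∃ P' : Set (CDSquare C), P' ⊆ P ∧
    (∀ Q ∈ P', Dm.dim Q.A ≤ Dm.dim Q.X ∧ Dm.dim Q.Y ≤ Dm.dim Q.X ∧ Dm.dim Q.B < Dm.dim Q.X) ∧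
    ∀ Q ∈ P, ∃ R : Presieve Q.X, IsSimpleCover P' Q.X R ∧
      ∀ ⦃Z⦄ (g : Z ⟶ Q.X), R g → Q.sieve g

end CdFormal




namespace CdFormalAux
open CdFormal

universe w' v'

variable {C : Type u} [Category.{v} C]


variable (P : Set (CDSquare C))

lemma cTopology_square_mem (Q : CDSquare C) (hQ : Q ∈ P) : Q.sieve ∈ cTopology P Q.X := by
  rw [cTopology, GrothendieckTopology.mem_sInf]
  exact fun J hJ => hJ Q hQ

lemma generate_simple_mem {X : C} {R : Presieve X} (h : IsSimpleCover P X R) :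
    Sieve.generate R ∈ cTopology P X := by
  induction h with
  | iso f hf =>
      refine (cTopology P).superset_covering ?_ ((cTopology P).top_mem _)
      rintro Z g -
      exact ⟨_, g ≫ inv f, f, ⟨⟩, by simp⟩
  | glue Q hQ RY RA hY hA ihY ihA =>
      refine (cTopology P).transitive (cTopology_square_mem P Q hQ) _ ?_
      rintro Z f (⟨h, rfl⟩ | ⟨h, rfl⟩)
      · -- f = h ≫ Q.i
        refine (cTopology P).superset_covering ?_
          ((cTopology P).pullback_stable h ihA)
        rintro W g ⟨V, g', k, hk, hg⟩
        exact ⟨V, g', k ≫ Q.i, Or.inr ⟨k, hk, rfl⟩, by rw [← Category.assoc, hg, Category.assoc]⟩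
      · refine (cTopology P).superset_covering ?_
          ((cTopology P).pullback_stable h ihY)
        rintro W g ⟨V, g', k, hk, hg⟩
        exact ⟨V, g', k ≫ Q.p, Or.inl ⟨k, hk, rfl⟩, by rw [← Category.assoc, hg, Category.assoc]⟩


variable (G : Cᵒᵖ ⥤ Type w')

variable {C : Type u} [Category.{v} C] (P : Set (CDSquare C))
variable (G : Cᵒᵖ ⥤ Type w')

/-- elements agreeing on a simple cover are equal -/
lemma simple_sep
    (hG : ∀ Q ∈ P, IsPullback (G.map Q.i.op) (G.map Q.p.op) (G.map Q.e.op) (G.map Q.q.op))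
    {X : C} {R : Presieve X} (h : IsSimpleCover P X R)
    (t₁ t₂ : G.obj (op X)) (hagree : ∀ ⦃Z⦄ (g : Z ⟶ X), R g → G.map g.op t₁ = G.map g.op t₂) :
    t₁ = t₂ := by
  induction h with
  | iso f hf =>
      have := hagree f (Presieve.singleton.mk)
      have hinj : Function.Injective (G.map f.op) := by
        have : IsIso (G.map f.op) := inferInstance
        exact (asIso (G.map f.op)).toEquiv.injective
      exact hinj this
  | glue Q hQ RY RA hY hA ihY ihA =>
      have hYeq : G.map Q.p.op t₁ = G.map Q.p.op t₂ := by
        refine ihY (G.map Q.p.op t₁) (G.map Q.p.op t₂) ?_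
        intro Z g hg
        have := hagree (g ≫ Q.p) (Or.inl ⟨g, hg, rfl⟩)
        simpa [FunctorToTypes.map_comp_apply] using this
      have hAeq : G.map Q.i.op t₁ = G.map Q.i.op t₂ := by
        refine ihA (G.map Q.i.op t₁) (G.map Q.i.op t₂) ?_
        intro Z g hg
        have := hagree (g ≫ Q.i) (Or.inr ⟨g, hg, rfl⟩)
        simpa [FunctorToTypes.map_comp_apply] using this
      exact PullbackCone.IsLimit.type_ext (hG Q hQ).isLimit hAeq hYeq

/-- elements agreeing on a covering sieve are equal -/
lemma cover_sep (hP : IsCComplete P)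
    (hG : ∀ Q ∈ P, IsPullback (G.map Q.i.op) (G.map Q.p.op) (G.map Q.e.op) (G.map Q.q.op))
    {X : C} {S : Sieve X} (hS : S ∈ cTopology P X)
    (t₁ t₂ : G.obj (op X)) (hagree : ∀ ⦃Z⦄ (g : Z ⟶ X), S g → G.map g.op t₁ = G.map g.op t₂) :
    t₁ = t₂ := by
  obtain ⟨R, hR, hRS⟩ := hP S hS
  exact simple_sep P G hG hR t₁ t₂ fun Z g hg => hagree g (hRS g hg)



variable {C : Type u} [Category.{v} C] (P : Set (CDSquare C))
variable (G : Cᵒᵖ ⥤ Type w')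

lemma simple_exists (hP : IsCComplete P)
    (hG : ∀ Q ∈ P, IsPullback (G.map Q.i.op) (G.map Q.p.op) (G.map Q.e.op) (G.map Q.q.op))
    {X : C} {R : Presieve X} (h : IsSimpleCover P X R) :
    ∀ (x : Presieve.FamilyOfElements G (Sieve.generate R : Sieve X).arrows),
      x.Compatible → ∃ t : G.obj (op X), x.IsAmalgamation t := by
  induction h with
  | @iso X' X f hf =>
      intro x hx
      have hid : (Sieve.generate (Presieve.singleton f)) (inv f ≫ f) :=
        ⟨_, inv f, f, Presieve.singleton.mk, rfl⟩
      refine ⟨G.map (inv f).op (x f ⟨_, 𝟙 _, f, Presieve.singleton.mk, by simp⟩), ?_⟩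
      intro Z g hg
      have := hx (f₁ := f) (f₂ := g) (g ≫ inv f) (𝟙 Z)
        ⟨_, 𝟙 _, f, Presieve.singleton.mk, by simp⟩ hg (by simp)
      simpa [FunctorToTypes.map_comp_apply] using this
  | @glue Q hQ RY RA hY hA ihY ihA =>
      intro x hx
      have hYle : ∀ {Z : C} (k : Z ⟶ Q.Y), (Sieve.generate RY) k →
          (Sieve.generate (fun Z g =>
          (∃ h : Z ⟶ Q.Y, RY h ∧ g = h ≫ Q.p) ∨ (∃ h : Z ⟶ Q.A, RA h ∧ g = h ≫ Q.i))) (k ≫ Q.p) := by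
        rintro Z k ⟨V, g', f, hf, rfl⟩
        exact ⟨V, g', f ≫ Q.p, Or.inl ⟨f, hf, rfl⟩, by simp⟩
      have hAle : ∀ {Z : C} (k : Z ⟶ Q.A), (Sieve.generate RA) k →
          (Sieve.generate (fun Z g =>
          (∃ h : Z ⟶ Q.Y, RY h ∧ g = h ≫ Q.p) ∨ (∃ h : Z ⟶ Q.A, RA h ∧ g = h ≫ Q.i))) (k ≫ Q.i) := by
        rintro Z k ⟨V, g', f, hf, rfl⟩
        exact ⟨V, g', f ≫ Q.i, Or.inr ⟨f, hf, rfl⟩, by simp⟩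
      -- restricted families
      have hxYc : (Presieve.FamilyOfElements.Compatible
          (fun Z k hk => x (k ≫ Q.p) (hYle k hk) :
            Presieve.FamilyOfElements G (Sieve.generate RY : Sieve Q.Y).arrows)) := by
        intro Y₁ Y₂ Z g₁ g₂ f₁ f₂ h₁ h₂ e
        exact hx g₁ g₂ (hYle f₁ h₁) (hYle f₂ h₂)
          (by rw [← Category.assoc, ← Category.assoc, e])
      have hxAc : (Presieve.FamilyOfElements.Compatible
          (fun Z k hk => x (k ≫ Q.i) (hAle k hk) :
            Presieve.FamilyOfElements G (Sieve.generate RA : Sieve Q.A).arrows)) := by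
        intro Y₁ Y₂ Z g₁ g₂ f₁ f₂ h₁ h₂ e
        exact hx g₁ g₂ (hAle f₁ h₁) (hAle f₂ h₂)
          (by rw [← Category.assoc, ← Category.assoc, e])
      obtain ⟨tY, htY⟩ := ihY _ hxYc
      obtain ⟨tA, htA⟩ := ihA _ hxAc
      -- agreement on B
      have hcomm : G.map Q.e.op tA = G.map Q.q.op tY := by
        refine cover_sep P G hP hG
          ((cTopology P).intersection_covering
            ((cTopology P).pullback_stable Q.q (generate_simple_mem P hY))
            ((cTopology P).pullback_stable Q.e (generate_simple_mem P hA))) _ _ ?_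
        rintro Z g ⟨hgq, hge⟩
        have h1 : G.map g.op (G.map Q.e.op tA) = x ((g ≫ Q.e) ≫ Q.i) (hAle _ hge) := by
          rw [← FunctorToTypes.map_comp_apply, ← op_comp]; exact htA (g ≫ Q.e) hge
        have h2 : G.map g.op (G.map Q.q.op tY) = x ((g ≫ Q.q) ≫ Q.p) (hYle _ hgq) := by
          rw [← FunctorToTypes.map_comp_apply, ← op_comp]; exact htY (g ≫ Q.q) hgq
        rw [h1, h2]
        have := hx (𝟙 Z) (𝟙 Z) (hAle (g ≫ Q.e) hge) (hYle (g ≫ Q.q) hgq)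
          (by simp only [Category.id_comp, Category.assoc, Q.w])
        simpa using this
      -- lift through the pullback square
      set t : G.obj (op Q.X) := (PullbackCone.IsLimit.equivPullbackObj (hG Q hQ).isLimit).symm
        ⟨⟨tA, tY⟩, hcomm⟩ with ht
      have hti : G.map Q.i.op t = tA :=
        PullbackCone.IsLimit.equivPullbackObj_symm_apply_fst (hG Q hQ).isLimit _
      have htp : G.map Q.p.op t = tY :=
        PullbackCone.IsLimit.equivPullbackObj_symm_apply_snd (hG Q hQ).isLimit _
      refine ⟨t, ?_⟩
      rintro Z g ⟨V, g', f, hf, rfl⟩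
      have key : G.map f.op t = x f ⟨V, 𝟙 V, f, hf, Category.id_comp f⟩ := by
        rcases hf with ⟨k, hk, rfl⟩ | ⟨k, hk, rfl⟩
        · rw [op_comp, FunctorToTypes.map_comp_apply, htp]
          rw [htY k ⟨V, 𝟙 V, k, hk, Category.id_comp k⟩]
        · rw [op_comp, FunctorToTypes.map_comp_apply, hti]
          rw [htA k ⟨V, 𝟙 V, k, hk, Category.id_comp k⟩]
      rw [op_comp, FunctorToTypes.map_comp_apply, key]
      have := hx g' (𝟙 Z) ⟨V, 𝟙 V, f, hf, Category.id_comp f⟩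
        ⟨V, g', f, hf, rfl⟩ (by simp)
      simpa using this


lemma isSheaf_type (hP : IsCComplete P)
    (hG : ∀ Q ∈ P, IsPullback (G.map Q.i.op) (G.map Q.p.op) (G.map Q.e.op) (G.map Q.q.op)) :
    Presieve.IsSheaf (cTopology P) G := by
  intro X S hS x hx
  obtain ⟨R, hR, hRS⟩ := hP S hS
  have hle : Sieve.generate R ≤ S := by
    rintro Z g ⟨V, g', f, hf, rfl⟩
    exact S.downward_closed (hRS f hf) g'
  have hx'c : Presieve.FamilyOfElements.Compatible
      (fun Z g hg => x g (hle g hg) :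
        Presieve.FamilyOfElements G (Sieve.generate R : Sieve X).arrows) := by
    intro Y₁ Y₂ Z g₁ g₂ f₁ f₂ h₁ h₂ e
    exact hx g₁ g₂ (hle f₁ h₁) (hle f₂ h₂) e
  obtain ⟨t, ht⟩ := simple_exists P G hP hG hR _ hx'c
  have hamalg : x.IsAmalgamation t := by
    intro Z g hg
    refine cover_sep P G hP hG
      ((cTopology P).pullback_stable g (generate_simple_mem P hR)) _ _ ?_
    intro W k hk
    have h1 : G.map k.op (G.map g.op t) = x (k ≫ g) (hle (k ≫ g) hk) := by
      rw [← FunctorToTypes.map_comp_apply, ← op_comp]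
      exact ht (k ≫ g) hk
    have h2 : G.map k.op (x g hg) = x (k ≫ g) (S.downward_closed hg k) := by
      have := hx (𝟙 W) k (S.downward_closed hg k) hg (by simp)
      simpa using this.symm
    rw [h1, h2]
  refine ⟨t, hamalg, ?_⟩
  intro t' ht'
  refine cover_sep P G hP hG hS _ _ ?_
  intro Z g hg
  rw [ht' g hg, hamalg g hg]


end CdFormalAux


namespace CdFormal

/-- If `P` is a c-complete cd-structure on `C` and a presheaf `F : Cᵒᵖ ⥤ A` sends every
distinguished square of `P` to a pullback square in `A`, then `F` is a sheaf for the
associated c-topology. -/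
theorem isSheaf_of_sends_distinguished_to_pullback
    {C : Type u} [Category.{v} C] {A : Type w} [Category.{v'} A]
    (P : Set (CDSquare C)) (hP : IsCComplete P) (F : Cᵒᵖ ⥤ A)
    (hF : ∀ Q ∈ P,
      IsPullback (F.map Q.i.op) (F.map Q.p.op) (F.map Q.e.op) (F.map Q.q.op)) :
    Presheaf.IsSheaf (cTopology P) F := by
  intro E
  refine CdFormalAux.isSheaf_type P (F ⋙ coyoneda.obj (op E)) hP ?_
  intro Q hQ
  exact (hF Q hQ).map (coyoneda.obj (op E))

end CdFormal
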